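/- Let T = {t_1 < t_2 < ... < t_{2m}} be a set of positive integers. Then the sum of s_{λ(A)}(x_1,...,x_n) · s_{λ(B)}(x_1,...,x_n), taken over all ordered pairs of disjoint sets A, B with A ∪ B = T and |A| = |B| = m, equals 2^m · s_{λ(t_2, t_4, ..., t_{2m})}(x_1,...,x_n) · s_{λ(t_1, t_3, ..., t_{2m-1})}(x_1,...,x_n). -/

import Mathlib

open Finset

/-- Complete homogeneous symmetric function `h_k` in `n` variables (0 for `k < 0`). -/
def hZ (n : ℕ) (k : ℤ) (x : Fin n → ℚ) : ℚ :=
  if 0 ≤ k then ∑ d ∈ Finset.Nat.antidiagonalTuple n k.toNat, ∏ i, x i ^ d i else 0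

/-- For a finite set `A = {a_1 < … < a_m}` of naturals, the Schur function
`s_{λ(A)}` in `n` variables, `λ(A) = (a_m - m + 1, …, a_2 - 1, a_1)`,
via the Jacobi–Trudi determinant. -/
def schurF (n : ℕ) (A : Finset ℕ) (x : Fin n → ℚ) : ℚ :=
  Matrix.det (Matrix.of fun i j : Fin A.card =>
    hZ n ((A.orderEmbOfFin rfl i.rev : ℤ) - (i.rev : ℕ) - (i : ℕ) + (j : ℕ)) x)


open Finset Equiv Matrix

namespace CiucuAux

variable {m k N : ℕ}

lemma card_compl_eq {S : Finset (Fin (2*m))} (h : S.card = m) : Sᶜ.card = m := by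
  simp only [Finset.card_compl, Fintype.card_fin, h]; omega

/-- The equivalence `Fin m ⊕ Fin m ≃ Fin (2m)` given by listing `S` then `Sᶜ`. -/
noncomputable def eqS (S : Finset (Fin (2*m))) (h : S.card = m) :
    (Fin m ⊕ Fin m) ≃ Fin (2*m) :=
  Equiv.ofBijective (Sum.elim (S.orderEmbOfFin h) (Sᶜ.orderEmbOfFin (card_compl_eq h)))
    (by
      rw [Fintype.bijective_iff_injective_and_card]
      refine ⟨?_, by simp [Fintype.card_sum]; omega⟩
      rintro (i|i) (j|j) hij
      · simpa using (S.orderEmbOfFin h).injective (by simpa using hij)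
      · exfalso
        have h1 := Finset.orderEmbOfFin_mem S h i
        have h2 := Finset.orderEmbOfFin_mem Sᶜ (card_compl_eq h) j
        simp only [Sum.elim_inl, Sum.elim_inr] at hij
        rw [hij] at h1
        rw [Finset.mem_compl] at h2
        exact h2 h1
      · exfalso
        have h1 := Finset.orderEmbOfFin_mem S h j
        have h2 := Finset.orderEmbOfFin_mem Sᶜ (card_compl_eq h) i
        simp only [Sum.elim_inl, Sum.elim_inr] at hij
        rw [← hij] at h1
        rw [Finset.mem_compl] at h2
        exact h2 h1
      · simpa using (Sᶜ.orderEmbOfFin (card_compl_eq h)).injective (by simpa using hij))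

@[simp] lemma eqS_inl (S : Finset (Fin (2*m))) (h : S.card = m) (i : Fin m) :
    eqS S h (Sum.inl i) = S.orderEmbOfFin h i := rfl

@[simp] lemma eqS_inr (S : Finset (Fin (2*m))) (h : S.card = m) (i : Fin m) :
    eqS S h (Sum.inr i) = Sᶜ.orderEmbOfFin (card_compl_eq h) i := rfl

/-- Total version of `orderEmbOfFin` for `m`-subsets of `Fin (2m)`. -/
noncomputable def embF (S : Finset (Fin (2*m))) : Fin m → Fin (2*m) :=
  if h : S.card = m then ⇑(S.orderEmbOfFin h) else fun i => ⟨i.val, by have := i.isLt; omega⟩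

lemma embF_of_card {S : Finset (Fin (2*m))} (h : S.card = m) :
    embF S = ⇑(S.orderEmbOfFin h) := dif_pos h

/-- The sign attached to a subset in the Laplace expansion. -/
noncomputable def csgn (e : (Fin m ⊕ Fin m) ≃ Fin (2*m)) (S : Finset (Fin (2*m))) : ℤ :=
  if h : S.card = m then (Equiv.Perm.sign ((eqS S h).trans e.symm) : ℤ) else 0

def msub (V : Fin m → Fin (2*m) → ℚ) (f : Fin m → Fin (2*m)) :
    Matrix (Fin m) (Fin m) ℚ :=
  Matrix.of fun r c => V r (f c)

lemma det_apply_col {ι : Type*} [DecidableEq ι] [Fintype ι] (M : Matrix ι ι ℚ) :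
    M.det = ∑ σ : Equiv.Perm ι, ((Equiv.Perm.sign σ : ℤ) : ℚ) * ∏ i, M i (σ i) := by
  rw [← Matrix.det_transpose, Matrix.det_apply']
  rfl

lemma image_emb_perm (S : Finset (Fin N)) (h : S.card = k) (σ : Equiv.Perm (Fin k)) :
    Finset.image (fun j => S.orderEmbOfFin h (σ j)) Finset.univ = S := by
  apply Finset.eq_of_subset_of_card_le
  · intro t ht
    rcases Finset.mem_image.1 ht with ⟨j, _, rfl⟩
    exact Finset.orderEmbOfFin_mem S h _
  · rw [h]
    have : Finset.card (Finset.image (fun j => S.orderEmbOfFin h (σ j)) Finset.univ) = k := by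
      have hinj : Function.Injective (fun j => S.orderEmbOfFin h (σ j)) :=
        Function.Injective.comp (S.orderEmbOfFin h).injective σ.injective
      rw [Finset.card_image_of_injective _ hinj]
      simp
    omega


lemma laplace (V W : Fin m → Fin (2*m) → ℚ) (e : (Fin m ⊕ Fin m) ≃ Fin (2*m)) :
    (Matrix.of fun r c : Fin m ⊕ Fin m => Sum.elim V W r (e c)).det
      = ∑ S ∈ Finset.powersetCard m (Finset.univ : Finset (Fin (2*m))),
          (csgn e S : ℚ) * (msub V (embF S)).det * (msub W (embF Sᶜ)).det := by
  classical
  have hrhs : ∀ S ∈ Finset.powersetCard m (Finset.univ : Finset (Fin (2*m))),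
      (csgn e S : ℚ) * (msub V (embF S)).det * (msub W (embF Sᶜ)).det
        = ∑ p : Equiv.Perm (Fin m) × Equiv.Perm (Fin m),
            (csgn e S : ℚ)
              * (((Equiv.Perm.sign p.1 : ℤ) : ℚ) * ∏ j, (msub V (embF S)) j (p.1 j))
              * (((Equiv.Perm.sign p.2 : ℤ) : ℚ) * ∏ j, (msub W (embF Sᶜ)) j (p.2 j)) := by
    intro S hS
    rw [det_apply_col, det_apply_col, mul_assoc, Finset.sum_mul_sum, ← Finset.univ_product_univ,
      Finset.sum_product, Finset.mul_sum]
    refine Finset.sum_congr rfl fun σ _ => ?_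
    rw [Finset.mul_sum]
    exact Finset.sum_congr rfl fun τ _ => by ring
  rw [Finset.sum_congr rfl hrhs, det_apply_col]
  have hsig := Finset.sum_sigma (Finset.powersetCard m (Finset.univ : Finset (Fin (2*m))))
    (fun _ => (Finset.univ : Finset (Equiv.Perm (Fin m) × Equiv.Perm (Fin m))))
    (fun q =>
      (csgn e q.1 : ℚ)
        * (((Equiv.Perm.sign q.2.1 : ℤ) : ℚ) * ∏ j, (msub V (embF q.1)) j (q.2.1 j))
        * (((Equiv.Perm.sign q.2.2 : ℤ) : ℚ) * ∏ j, (msub W (embF q.1ᶜ)) j (q.2.2 j)))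
  rw [← hsig]
  refine (Finset.sum_bij
    (i := fun (p : (_ : Finset (Fin (2*m))) × (Equiv.Perm (Fin m) × Equiv.Perm (Fin m))) hp =>
      ((Equiv.sumCongr p.2.1 p.2.2).trans
        ((eqS p.1 (Finset.mem_powersetCard_univ.1 (Finset.mem_sigma.1 hp).1)).trans e.symm)))
    ?_ ?_ ?_ ?_).symm
  · intro p hp; exact Finset.mem_univ _
  · rintro ⟨S, σ, τ⟩ hp ⟨S', σ', τ'⟩ hq hpq
    have hSm : S.card = m := Finset.mem_powersetCard_univ.1 (Finset.mem_sigma.1 hp).1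
    have hSm' : S'.card = m := Finset.mem_powersetCard_univ.1 (Finset.mem_sigma.1 hq).1
    have key : ∀ x, (eqS S hSm) ((Equiv.sumCongr σ τ) x)
        = (eqS S' hSm') ((Equiv.sumCongr σ' τ') x) := by
      intro x
      have := congrArg (fun (f : (Fin m ⊕ Fin m) ≃ (Fin m ⊕ Fin m)) => e (f x)) hpq
      simpa using this
    have keyl : ∀ j, S.orderEmbOfFin hSm (σ j) = S'.orderEmbOfFin hSm' (σ' j) := by
      intro j; have := key (Sum.inl j); simpa using this
    have keyr : ∀ j, Sᶜ.orderEmbOfFin (card_compl_eq hSm) (τ j)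
        = S'ᶜ.orderEmbOfFin (card_compl_eq hSm') (τ' j) := by
      intro j; have := key (Sum.inr j); simpa using this
    have hSS : S = S' := by
      rw [← image_emb_perm S hSm σ, ← image_emb_perm S' hSm' σ']
      exact Finset.image_congr (fun j _ => keyl j)
    subst hSS
    have hσ : σ = σ' := Equiv.ext fun j => (S.orderEmbOfFin hSm).injective (keyl j)
    have hτ : τ = τ' :=
      Equiv.ext fun j => (Sᶜ.orderEmbOfFin (card_compl_eq hSm)).injective (keyr j)
    simp [hσ, hτ]
  · intro π _
    set S : Finset (Fin (2*m)) := Finset.image (fun j => e (π (Sum.inl j))) Finset.univ with hSdef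
    have hinj : Function.Injective (fun j : Fin m => e (π (Sum.inl j))) := by
      intro a b hab
      simpa using e.injective hab |> π.injective |> Sum.inl.inj
    have hSm : S.card = m := by
      rw [hSdef, Finset.card_image_of_injective _ hinj]; simp
    have hmeml : ∀ j, e (π (Sum.inl j)) ∈ S := by
      intro j; rw [hSdef]; exact Finset.mem_image_of_mem _ (Finset.mem_univ _)
    have hmemr : ∀ j, e (π (Sum.inr j)) ∈ Sᶜ := by
      intro j
      rw [Finset.mem_compl, hSdef]
      intro hmem
      rcases Finset.mem_image.1 hmem with ⟨j', _, hj'⟩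
      have := e.injective hj' |> π.injective
      simp at this
    set σ0 : Fin m → Fin m := fun j => (S.orderIsoOfFin hSm).symm ⟨e (π (Sum.inl j)), hmeml j⟩
      with hσ0
    set τ0 : Fin m → Fin m :=
      fun j => (Sᶜ.orderIsoOfFin (card_compl_eq hSm)).symm ⟨e (π (Sum.inr j)), hmemr j⟩ with hτ0
    have hσ0v : ∀ j, S.orderEmbOfFin hSm (σ0 j) = e (π (Sum.inl j)) := by
      intro j
      rw [← Finset.coe_orderIsoOfFin_apply, hσ0]
      simp
    have hτ0v : ∀ j, Sᶜ.orderEmbOfFin (card_compl_eq hSm) (τ0 j) = e (π (Sum.inr j)) := by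
      intro j
      rw [← Finset.coe_orderIsoOfFin_apply, hτ0]
      simp
    have hσ0inj : Function.Injective σ0 := by
      intro a b hab
      have : S.orderEmbOfFin hSm (σ0 a) = S.orderEmbOfFin hSm (σ0 b) := by rw [hab]
      rw [hσ0v, hσ0v] at this
      exact hinj (this)
    have hτ0inj : Function.Injective τ0 := by
      intro a b hab
      have : Sᶜ.orderEmbOfFin (card_compl_eq hSm) (τ0 a)
          = Sᶜ.orderEmbOfFin (card_compl_eq hSm) (τ0 b) := by rw [hab]
      rw [hτ0v, hτ0v] at this
      have := e.injective this |> π.injective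
      simpa using this
    refine ⟨⟨S, Equiv.ofBijective σ0 (Finite.injective_iff_bijective.1 hσ0inj),
      Equiv.ofBijective τ0 (Finite.injective_iff_bijective.1 hτ0inj)⟩, ?_, ?_⟩
    · rw [Finset.mem_sigma]
      exact ⟨Finset.mem_powersetCard_univ.2 hSm, Finset.mem_univ _⟩
    · ext x
      rcases x with j | j
      · simp only [Equiv.trans_apply, Equiv.sumCongr_apply, Sum.map_inl,
          Equiv.ofBijective_apply, eqS_inl]
        rw [hσ0v]
        simp
      · simp only [Equiv.trans_apply, Equiv.sumCongr_apply, Sum.map_inr,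
          Equiv.ofBijective_apply, eqS_inr]
        rw [hτ0v]
        simp
  · rintro ⟨S, σ, τ⟩ hp
    have hSm : S.card = m := Finset.mem_powersetCard_univ.1 (Finset.mem_sigma.1 hp).1
    have hsign : ((Equiv.Perm.sign ((Equiv.sumCongr σ τ).trans ((eqS S hSm).trans e.symm)) : ℤ) : ℚ)
        = (csgn e S : ℚ) * ((Equiv.Perm.sign σ : ℤ) : ℚ) * ((Equiv.Perm.sign τ : ℤ) : ℚ) := by
      have : (Equiv.sumCongr σ τ).trans ((eqS S hSm).trans e.symm)
          = ((eqS S hSm).trans e.symm) * (Equiv.sumCongr σ τ) := rfl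
      rw [this, Equiv.Perm.sign_mul, Equiv.Perm.sign_sumCongr, csgn, dif_pos hSm]
      push_cast
      ring
    rw [hsign]
    have hprod : ∀ (ρ : Equiv.Perm (Fin m ⊕ Fin m)),
        (∏ i, (Matrix.of fun r c : Fin m ⊕ Fin m => Sum.elim V W r (e c)) i (ρ i))
          = (∏ j, (Matrix.of fun r c : Fin m ⊕ Fin m => Sum.elim V W r (e c)) (Sum.inl j) (ρ (Sum.inl j)))
            * ∏ j, (Matrix.of fun r c : Fin m ⊕ Fin m => Sum.elim V W r (e c)) (Sum.inr j) (ρ (Sum.inr j)) :=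
      fun ρ => Fintype.prod_sum_type _
    rw [hprod]
    have h1 : ∀ j, (Matrix.of fun r c : Fin m ⊕ Fin m => Sum.elim V W r (e c)) (Sum.inl j)
        (((Equiv.sumCongr σ τ).trans ((eqS S hSm).trans e.symm)) (Sum.inl j))
        = (msub V (embF S)) j (σ j) := by
      intro j
      simp [msub, embF_of_card hSm]
    have h2 : ∀ j, (Matrix.of fun r c : Fin m ⊕ Fin m => Sum.elim V W r (e c)) (Sum.inr j)
        (((Equiv.sumCongr σ τ).trans ((eqS S hSm).trans e.symm)) (Sum.inr j))
        = (msub W (embF Sᶜ)) j (τ j) := by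
      intro j
      simp [msub, embF_of_card (card_compl_eq hSm)]
    simp only [h1, h2]
    ring


lemma orderEmbOfFin_congr {α : Type*} [LinearOrder α] {S S' : Finset α} (hSS : S = S')
    {k : ℕ} (h : S.card = k) (h' : S'.card = k) (i : Fin k) :
    S.orderEmbOfFin h i = S'.orderEmbOfFin h' i := by subst hSS; rfl

lemma emb_swap_down {S : Finset (Fin N)} (hS : S.card = k) {a b : Fin N}
    (hab : (a : ℕ) + 1 = (b : ℕ)) (hbS : b ∈ S) (haS : a ∉ S)
    (hS' : (insert a (S.erase b)).card = k) (i : Fin k) :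
    (insert a (S.erase b)).orderEmbOfFin hS' i = Equiv.swap a b (S.orderEmbOfFin hS i) := by
  have hmem : ∀ i : Fin k, Equiv.swap a b (S.orderEmbOfFin hS i) ∈ insert a (S.erase b) := by
    intro i
    by_cases h : S.orderEmbOfFin hS i = b
    · rw [h, Equiv.swap_apply_right]; exact Finset.mem_insert_self _ _
    · have hmm := Finset.orderEmbOfFin_mem S hS i
      have hna : S.orderEmbOfFin hS i ≠ a := fun hh => haS (hh ▸ hmm)
      rw [Equiv.swap_apply_of_ne_of_ne hna h]
      exact Finset.mem_insert_of_mem (Finset.mem_erase.2 ⟨h, hmm⟩)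
  have hmono : StrictMono (fun i => Equiv.swap a b (S.orderEmbOfFin hS i)) := by
    intro i j hij
    show Equiv.swap a b (S.orderEmbOfFin hS i) < Equiv.swap a b (S.orderEmbOfFin hS j)
    have huv : S.orderEmbOfFin hS i < S.orderEmbOfFin hS j := (S.orderEmbOfFin hS).strictMono hij
    have hmi := Finset.orderEmbOfFin_mem S hS i
    have hmj := Finset.orderEmbOfFin_mem S hS j
    set u := S.orderEmbOfFin hS i with hu
    set v := S.orderEmbOfFin hS j with hv
    have hua : u ≠ a := fun hh => haS (hh ▸ hmi)
    have hva : v ≠ a := fun hh => haS (hh ▸ hmj)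
    by_cases hvb : v = b
    · have hub : u ≠ b := fun hh => absurd (hh.trans hvb.symm) (ne_of_lt huv)
      rw [hvb, Equiv.swap_apply_right, Equiv.swap_apply_of_ne_of_ne hua hub]
      have h1 : (u : ℕ) < (b : ℕ) := by rw [← hvb]; exact huv
      have h2 : (u : ℕ) ≠ (a : ℕ) := fun hh => hua (Fin.ext hh)
      exact Fin.lt_def.2 (by omega)
    · by_cases hub : u = b
      · rw [hub, Equiv.swap_apply_right, Equiv.swap_apply_of_ne_of_ne hva hvb]
        have h1 : (b : ℕ) < (v : ℕ) := by rw [← hub]; exact huv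
        exact Fin.lt_def.2 (by omega)
      · rw [Equiv.swap_apply_of_ne_of_ne hua hub,
          Equiv.swap_apply_of_ne_of_ne hva hvb]
        exact huv
  exact (congrFun (Finset.orderEmbOfFin_unique hS' hmem hmono) i).symm

lemma emb_swap_up {S : Finset (Fin N)} (hS : S.card = k) {a b : Fin N}
    (hab : (a : ℕ) + 1 = (b : ℕ)) (haS : a ∈ S) (hbS : b ∉ S)
    (hS' : (insert b (S.erase a)).card = k) (i : Fin k) :
    (insert b (S.erase a)).orderEmbOfFin hS' i = Equiv.swap a b (S.orderEmbOfFin hS i) := by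
  have hne : a ≠ b := fun hh => by rw [hh] at hab; omega
  set S0 := insert b (S.erase a) with hS0
  have hbS0 : b ∈ S0 := Finset.mem_insert_self _ _
  have haS0 : a ∉ S0 := by
    rw [hS0, Finset.mem_insert]
    rintro (h | h)
    · exact hne h
    · exact (Finset.mem_erase.1 h).1 rfl
  have hback : insert a (S0.erase b) = S := by
    ext t
    simp only [hS0, Finset.mem_insert, Finset.mem_erase]
    constructor
    · rintro (rfl | ⟨htb, (rfl | ⟨hta, htS⟩)⟩)
      · exact haS
      · exact absurd rfl htb
      · exact htS
    · intro htS
      by_cases hta : t = a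
      · exact Or.inl hta
      · exact Or.inr ⟨fun htb => hbS (htb ▸ htS), Or.inr ⟨hta, htS⟩⟩
  have hcard : S.card = k := hS
  have := emb_swap_down (S := S0) hS' hab hbS0 haS0
    (hS' := by rw [hback]; exact hS) i
  have h2 : S.orderEmbOfFin hS i = Equiv.swap a b (S0.orderEmbOfFin hS' i) := by
    rw [← orderEmbOfFin_congr hback (by rw [hback]; exact hS) hS i]
    exact this
  rw [h2, Equiv.swap_apply_self]

/-- The combined descent step for the sign/parity invariant. -/
lemma csgn_step (e : (Fin m ⊕ Fin m) ≃ Fin (2*m)) {S : Finset (Fin (2*m))}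
    (hS : S.card = m) {s : Fin (2*m)} (hsS : s ∈ S) (hs0 : (s : ℕ) ≠ 0)
    (hpred : (⟨(s : ℕ) - 1, by have := s.isLt; omega⟩ : Fin (2*m)) ∉ S) :
    (insert (⟨(s : ℕ) - 1, by have := s.isLt; omega⟩ : Fin (2*m)) (S.erase s)).card = m ∧
    csgn e (insert (⟨(s : ℕ) - 1, by have := s.isLt; omega⟩ : Fin (2*m)) (S.erase s)) = - csgn e S ∧
    (∑ i ∈ insert (⟨(s : ℕ) - 1, by have := s.isLt; omega⟩ : Fin (2*m)) (S.erase s), (i : ℕ)) + 1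
      = ∑ i ∈ S, (i : ℕ) := by
  set a : Fin (2*m) := ⟨(s : ℕ) - 1, by have := s.isLt; omega⟩ with ha
  have hav : (a : ℕ) + 1 = (s : ℕ) := by rw [ha]; simp; omega
  have hane : a ≠ s := fun hh => by rw [hh] at hav; omega
  set S' := insert a (S.erase s) with hS'def
  have hanotin : a ∉ S.erase s := fun hh => hpred (Finset.mem_of_mem_erase hh)
  have hcard : S'.card = m := by
    rw [hS'def, Finset.card_insert_of_notMem hanotin, Finset.card_erase_of_mem hsS, hS]
    have hpos : 0 < m := by rw [← hS]; exact Finset.card_pos.2 ⟨s, hsS⟩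
    omega
  refine ⟨hcard, ?_, ?_⟩
  · -- sign flips
    have hembl : ∀ i, S'.orderEmbOfFin hcard i = Equiv.swap a s (S.orderEmbOfFin hS i) :=
      emb_swap_down hS hav hsS hpred hcard
    have hcomplS' : S'ᶜ = insert s (Sᶜ.erase a) := by
      ext t
      simp only [hS'def, Finset.mem_compl, Finset.mem_insert, Finset.mem_erase]
      by_cases h1 : t = s
      · subst h1; simp [hsS, hane.symm]
      · by_cases h2 : t = a
        · subst h2; simp [hpred, hane, h1]
        · simp [h1, h2]
    have hembr : ∀ i, S'ᶜ.orderEmbOfFin (card_compl_eq hcard) i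
        = Equiv.swap a s (Sᶜ.orderEmbOfFin (card_compl_eq hS) i) := by
      intro i
      have haSc : a ∈ Sᶜ := Finset.mem_compl.2 hpred
      have hsSc : s ∉ Sᶜ := fun hh => (Finset.mem_compl.1 hh) hsS
      have hcc : (insert s (Sᶜ.erase a)).card = m := by
        rw [← hcomplS']; exact card_compl_eq hcard
      rw [orderEmbOfFin_congr hcomplS' (card_compl_eq hcard) hcc i]
      exact emb_swap_up (card_compl_eq hS) hav haSc hsSc hcc i
    have heq : eqS S' hcard = (eqS S hS).trans (Equiv.swap a s) := by
      apply Equiv.ext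
      rintro (i | i)
      · simp only [eqS_inl, Equiv.trans_apply]
        exact hembl i
      · simp only [eqS_inr, Equiv.trans_apply]
        exact hembr i
    have heq2 : (eqS S' hcard).trans e.symm
        = ((eqS S hS).trans e.symm).trans (Equiv.swap (e.symm a) (e.symm s)) := by
      rw [← Equiv.trans_swap_trans_symm a s e]
      apply Equiv.ext
      intro x
      simp only [Equiv.trans_apply, heq]
      have h3 := DFunLike.congr_fun (Equiv.trans_swap_trans_symm a s e)
        (e.symm ((eqS S hS) x))
      simpa using h3
    rw [csgn, csgn, dif_pos hcard, dif_pos hS, heq2]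
    have : ((eqS S hS).trans e.symm).trans (Equiv.swap (e.symm a) (e.symm s))
        = (Equiv.swap (e.symm a) (e.symm s)) * ((eqS S hS).trans e.symm) := rfl
    rw [this, Equiv.Perm.sign_mul, Equiv.Perm.sign_swap (fun hh => hane (e.symm.injective hh))]
    push_cast
    ring
  · -- sums
    rw [hS'def, Finset.sum_insert hanotin]
    have h2 : (∑ i ∈ S.erase s, (i : ℕ)) + (s : ℕ) = ∑ i ∈ S, (i : ℕ) :=
      Finset.sum_erase_add S _ hsS
    omega

def base (m : ℕ) : Finset (Fin (2*m)) :=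
  Finset.image (fun i : Fin m => (⟨(i : ℕ), by have := i.isLt; omega⟩ : Fin (2*m))) Finset.univ

lemma base_card : (base m).card = m := by
  rw [base, Finset.card_image_of_injective _ (fun i j hij => Fin.ext (by
    simpa using congrArg Fin.val hij))]
  simp


lemma mem_base_iff {t : Fin (2*m)} : t ∈ base m ↔ (t : ℕ) < m := by
  constructor
  · intro ht
    rcases Finset.mem_image.1 ht with ⟨i, _, rfl⟩
    exact i.isLt
  · intro ht
    exact Finset.mem_image.2 ⟨⟨t, ht⟩, Finset.mem_univ _, Fin.ext rfl⟩

lemma exists_descent {S : Finset (Fin (2*m))} (hS : S.card = m) (hSB : S ≠ base m) :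
    ∃ s : Fin (2*m), ∃ _ : s ∈ S, (s : ℕ) ≠ 0 ∧
      (⟨(s : ℕ) - 1, by have := s.isLt; omega⟩ : Fin (2*m)) ∉ S := by
  by_contra hcon
  push_neg at hcon
  apply hSB
  have key : ∀ t : ℕ, ∀ s ∈ S, (s : ℕ) ≤ t → ∀ j : Fin (2*m), (j : ℕ) ≤ (s : ℕ) → j ∈ S := by
    intro t
    induction t with
    | zero =>
      intro s hs hst j hj
      have : j = s := Fin.ext (by omega)
      rwa [this]
    | succ t IH =>
      intro s hs hst j hj
      by_cases hjs : (j : ℕ) = (s : ℕ)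
      · have : j = s := Fin.ext hjs
        rwa [this]
      · have hs0 : (s : ℕ) ≠ 0 := by omega
        have hpred := hcon s hs hs0
        exact IH _ hpred (by simp; omega) j (by simp; omega)
  have hsub : S ⊆ base m := by
    intro s hs
    rw [mem_base_iff]
    by_contra hms
    push_neg at hms
    have hslt := s.isLt
    have hfull : ∀ j : Fin (m+1),
        (⟨(j : ℕ), by have := j.isLt; omega⟩ : Fin (2*m)) ∈ S := by
      intro j
      exact key (s : ℕ) s hs le_rfl _ (by simp; have := j.isLt; omega)
    have hinj : Function.Injective
        (fun j : Fin (m+1) => (⟨(j : ℕ), by have := j.isLt; omega⟩ : Fin (2*m))) := by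
      intro a b hab
      exact Fin.ext (by simpa using congrArg Fin.val hab)
    have hcard := Finset.card_le_card (show Finset.image
        (fun j : Fin (m+1) => (⟨(j : ℕ), by have := j.isLt; omega⟩ : Fin (2*m)))
        Finset.univ ⊆ S by
      intro t ht
      rcases Finset.mem_image.1 ht with ⟨j, _, rfl⟩
      exact hfull j)
    rw [Finset.card_image_of_injective _ hinj, hS] at hcard
    simp at hcard
  exact Finset.eq_of_subset_of_card_le hsub (by rw [base_card, hS])

lemma csgn_parity (e : (Fin m ⊕ Fin m) ≃ Fin (2*m)) :
    ∀ (S : Finset (Fin (2*m))), S.card = m →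
      csgn e S * (-1 : ℤ) ^ (∑ i ∈ S, (i : ℕ))
        = csgn e (base m) * (-1 : ℤ) ^ (∑ i ∈ base m, (i : ℕ)) := by
  suffices H : ∀ (w : ℕ) (S : Finset (Fin (2*m))), S.card = m → (∑ i ∈ S, (i : ℕ)) = w →
      csgn e S * (-1 : ℤ) ^ (∑ i ∈ S, (i : ℕ))
        = csgn e (base m) * (-1 : ℤ) ^ (∑ i ∈ base m, (i : ℕ)) by
    intro S hS
    exact H _ S hS rfl
  intro w
  induction w using Nat.strong_induction_on with
  | _ w IH =>
    intro S hS hsum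
    by_cases hb : S = base m
    · subst hb; rfl
    · obtain ⟨s, hsS, hs0, hpred⟩ := exists_descent hS hb
      obtain ⟨hc1, hc2, hc3⟩ := csgn_step e hS hsS hs0 hpred
      have hw1 : 1 ≤ w := by omega
      have hw : (∑ i ∈ insert (⟨(s : ℕ) - 1, by have := s.isLt; omega⟩ : Fin (2*m))
          (S.erase s), (i : ℕ)) = w - 1 := by omega
      have hrec := IH (w-1) (by omega) _ hc1 hw
      rw [hw, hc2] at hrec
      rw [hsum]
      have hpow : (-1 : ℤ) ^ w = -(-1 : ℤ) ^ (w - 1) := by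
        have hww : w - 1 + 1 = w := by omega
        conv_lhs => rw [← hww]
        rw [pow_succ]; ring
      rw [hpow]
      rw [← hrec]
      ring


def evens (m : ℕ) : Finset (Fin (2*m)) :=
  Finset.image (fun i : Fin m => (⟨2 * (i : ℕ), by have := i.isLt; omega⟩ : Fin (2*m)))
    Finset.univ

def odds (m : ℕ) : Finset (Fin (2*m)) :=
  Finset.image (fun i : Fin m => (⟨2 * (i : ℕ) + 1, by have := i.isLt; omega⟩ : Fin (2*m)))
    Finset.univ

lemma mem_evens {t : Fin (2*m)} : t ∈ evens m ↔ (t : ℕ) % 2 = 0 := by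
  constructor
  · intro ht
    rcases Finset.mem_image.1 ht with ⟨i, _, rfl⟩
    simp [Nat.mul_mod_right]
  · intro ht
    have := t.isLt
    exact Finset.mem_image.2 ⟨⟨(t : ℕ) / 2, by omega⟩, Finset.mem_univ _, Fin.ext (by simp; omega)⟩

lemma mem_odds {t : Fin (2*m)} : t ∈ odds m ↔ (t : ℕ) % 2 = 1 := by
  constructor
  · intro ht
    rcases Finset.mem_image.1 ht with ⟨i, _, rfl⟩
    simp [Nat.add_mul_mod_self_left]
  · intro ht
    have := t.isLt
    exact Finset.mem_image.2 ⟨⟨(t : ℕ) / 2, by omega⟩, Finset.mem_univ _, Fin.ext (by simp; omega)⟩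

lemma evens_card : (evens m).card = m := by
  rw [evens, Finset.card_image_of_injective _ (fun i j hij => Fin.ext (by
    have := congrArg Fin.val hij; simp at this; omega))]
  simp

lemma odds_card : (odds m).card = m := by
  rw [odds, Finset.card_image_of_injective _ (fun i j hij => Fin.ext (by
    have := congrArg Fin.val hij; simp at this; omega))]
  simp

lemma evens_compl : (evens m)ᶜ = odds m := by
  ext t
  rw [Finset.mem_compl, mem_evens, mem_odds]
  omega

lemma emb_evens (i : Fin m) :
    (evens m).orderEmbOfFin evens_card i = (⟨2 * (i : ℕ), by have := i.isLt; omega⟩ : Fin (2*m)) := by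
  have := Finset.orderEmbOfFin_unique (f := fun i : Fin m =>
      (⟨2 * (i : ℕ), by have := i.isLt; omega⟩ : Fin (2*m))) evens_card
    (fun j => Finset.mem_image.2 ⟨j, Finset.mem_univ _, rfl⟩)
    (fun a b hab => Fin.lt_def.2 (by simp; omega))
  exact (congrFun this i).symm

lemma emb_odds (i : Fin m) :
    (odds m).orderEmbOfFin odds_card i
      = (⟨2 * (i : ℕ) + 1, by have := i.isLt; omega⟩ : Fin (2*m)) := by
  have := Finset.orderEmbOfFin_unique (f := fun i : Fin m =>
      (⟨2 * (i : ℕ) + 1, by have := i.isLt; omega⟩ : Fin (2*m))) odds_card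
    (fun j => Finset.mem_image.2 ⟨j, Finset.mem_univ _, rfl⟩)
    (fun a b hab => Fin.lt_def.2 (by simp; omega))
  exact (congrFun this i).symm

lemma sum_emb {S : Finset (Fin (2*m))} (h : S.card = m) (g : Fin (2*m) → ℕ) :
    (∑ j : Fin m, g (S.orderEmbOfFin h j)) = ∑ i ∈ S, g i := by
  have himg : Finset.image (fun j => S.orderEmbOfFin h j) Finset.univ = S :=
    image_emb_perm S h (Equiv.refl _)
  conv_rhs => rw [← himg]
  rw [Finset.sum_image (fun a _ b _ hab => (S.orderEmbOfFin h).injective hab)]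

lemma det_msub_signed (V : Fin m → Fin (2*m) → ℚ) {S : Finset (Fin (2*m))} (h : S.card = m) :
    (msub (fun r c => (-1 : ℚ)^(c : ℕ) * V r c) (embF S)).det
      = (-1 : ℚ)^(∑ i ∈ S, (i : ℕ)) * (msub V (embF S)).det := by
  have heq : msub (fun r c => (-1 : ℚ)^(c : ℕ) * V r c) (embF S)
      = Matrix.of fun i j => ((-1 : ℚ)^((embF S j : Fin (2*m)) : ℕ)) * (msub V (embF S)) i j :=
    rfl
  rw [heq, Matrix.det_mul_row]
  congr 1
  rw [Finset.prod_pow_eq_pow_sum]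
  congr 1
  rw [embF_of_card h]
  exact sum_emb h _

lemma detK (V : Fin m → Fin (2*m) → ℚ) :
    (Matrix.of fun r c : Fin m ⊕ Fin m =>
        Sum.elim V (fun r c => (-1 : ℚ)^(c : ℕ) * V r c) r (eqS (evens m) evens_card c)).det
      = (-2 : ℚ)^m * ((msub V (embF (evens m))).det * (msub V (embF (odds m))).det) := by
  set P := msub V (embF (evens m)) with hP
  set Q := msub V (embF (odds m)) with hQ
  have hblocks : (Matrix.of fun r c : Fin m ⊕ Fin m =>
      Sum.elim V (fun r c => (-1 : ℚ)^(c : ℕ) * V r c) r (eqS (evens m) evens_card c))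
      = Matrix.fromBlocks P Q P (-Q) := by
    have hembc : ∀ i : Fin m, (evens m)ᶜ.orderEmbOfFin (card_compl_eq evens_card) i
        = (⟨2 * (i : ℕ) + 1, by have := i.isLt; omega⟩ : Fin (2*m)) := by
      intro i
      rw [orderEmbOfFin_congr evens_compl (card_compl_eq evens_card) odds_card i]
      exact emb_odds i
    ext r c
    rcases r with r | r <;> rcases c with c | c
    · simp only [Matrix.of_apply, Sum.elim_inl, eqS_inl, Matrix.fromBlocks_apply₁₁, hP, msub,
        embF_of_card evens_card, emb_evens]
    · simp only [Matrix.of_apply, Sum.elim_inl, eqS_inr, Matrix.fromBlocks_apply₁₂, hQ, msub,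
        embF_of_card odds_card, hembc, emb_odds]
    · simp only [Matrix.of_apply, Sum.elim_inr, eqS_inl, Matrix.fromBlocks_apply₂₁, hP, msub,
        embF_of_card evens_card, emb_evens]
      rw [pow_mul]
      norm_num
    · simp only [Matrix.of_apply, Sum.elim_inr, eqS_inr, Matrix.fromBlocks_apply₂₂, hQ, msub,
        embF_of_card odds_card, hembc, emb_odds, Matrix.neg_apply]
      rw [pow_succ, pow_mul]
      norm_num
  rw [hblocks]
  have hfac : Matrix.fromBlocks P Q P (-Q)
      = Matrix.fromBlocks (1 : Matrix (Fin m) (Fin m) ℚ) 0 1 1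
        * Matrix.fromBlocks P Q 0 ((-2 : ℚ) • Q) := by
    rw [Matrix.fromBlocks_multiply]
    congr 1
    simp
    ext r c
    simp [Matrix.add_apply, Matrix.neg_apply, Matrix.smul_apply]
    · simp
    rw [one_mul, one_mul]
    ext r c
    simp only [Matrix.neg_apply, Matrix.add_apply, Matrix.smul_apply, smul_eq_mul]
    ring
  rw [hfac, Matrix.det_mul, Matrix.det_fromBlocks_zero₁₂, Matrix.det_fromBlocks_zero₂₁,
    Matrix.det_one, Matrix.det_smul]
  simp [Fintype.card_fin]
  ring


lemma neg_one_pow_mul_self (a : ℕ) : (-1 : ℤ)^a * (-1 : ℤ)^a = 1 := by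
  rw [← pow_add]
  exact Even.neg_one_pow ⟨a, rfl⟩

lemma csgn_eval {S : Finset (Fin (2*m))} (hSm : S.card = m) :
    csgn (eqS (evens m) evens_card) S = (-1 : ℤ)^(∑ i ∈ S, (i : ℕ)) := by
  set e := eqS (evens m) evens_card with he
  have hE : csgn e (evens m) = 1 := by
    rw [csgn, dif_pos evens_card, he, Equiv.self_trans_symm]
    simp
  have hwE : Even (∑ i ∈ evens m, (i : ℕ)) := by
    rw [evens, Finset.sum_image (fun a _ b _ hab => by
      have := congrArg Fin.val hab; simp at this; exact Fin.ext (by omega))]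
    refine ⟨∑ j : Fin m, (j : ℕ), ?_⟩
    rw [← Finset.sum_add_distrib]
    exact Finset.sum_congr rfl fun j _ => by simp; ring
  have h1 := csgn_parity e S hSm
  have h2 := csgn_parity e (evens m) evens_card
  rw [hE, hwE.neg_one_pow, one_mul] at h2
  rw [← h2] at h1
  have := congrArg (· * (-1 : ℤ)^(∑ i ∈ S, (i : ℕ))) h1
  simpa [mul_assoc, neg_one_pow_mul_self] using this

lemma sum_evens_val : (∑ i ∈ evens m, (i : ℕ)) = 2 * ∑ j : Fin m, (j : ℕ) := by
  rw [evens, Finset.sum_image (fun a _ b _ hab => by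
    have := congrArg Fin.val hab; simp at this; exact Fin.ext (by omega))]
  rw [Finset.mul_sum]

lemma sum_odds_val : (∑ i ∈ odds m, (i : ℕ)) = 2 * (∑ j : Fin m, (j : ℕ)) + m := by
  rw [odds, Finset.sum_image (fun a _ b _ hab => by
    have := congrArg Fin.val hab; simp at this; exact Fin.ext (by omega))]
  have : ∀ j : Fin m, ((⟨2 * (j : ℕ) + 1, by have := j.isLt; omega⟩ : Fin (2*m)) : ℕ)
      = 2 * (j : ℕ) + 1 := fun j => rfl
  rw [Finset.sum_congr rfl fun j _ => this j, Finset.sum_add_distrib]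
  rw [Finset.mul_sum]
  simp [Finset.card_univ]

lemma even_Nm : Even ((∑ i : Fin (2*m), (i : ℕ)) + m) := by
  have hsplit := Finset.sum_add_sum_compl (evens m) (fun i : Fin (2*m) => (i : ℕ))
  rw [evens_compl, sum_evens_val, sum_odds_val] at hsplit
  rw [← hsplit]
  exact ⟨2 * (∑ j : Fin m, (j : ℕ)) + m, by ring⟩

/-- The core determinant identity for an arbitrary `m × 2m` matrix. -/
lemma core (V : Fin m → Fin (2*m) → ℚ) :
    ∑ S ∈ Finset.powersetCard m (Finset.univ : Finset (Fin (2*m))),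
        (msub V (embF S)).det * (msub V (embF Sᶜ)).det
      = 2^m * ((msub V (embF (evens m))).det * (msub V (embF (odds m))).det) := by
  have hlap := laplace V (fun r c => (-1 : ℚ)^(c : ℕ) * V r c) (eqS (evens m) evens_card)
  rw [detK] at hlap
  have hterm : ∀ S ∈ Finset.powersetCard m (Finset.univ : Finset (Fin (2*m))),
      (csgn (eqS (evens m) evens_card) S : ℚ) * (msub V (embF S)).det
          * (msub (fun r c => (-1 : ℚ)^(c : ℕ) * V r c) (embF Sᶜ)).det
        = (((-1 : ℤ)^((∑ i : Fin (2*m), (i : ℕ))) : ℤ) : ℚ)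
            * ((msub V (embF S)).det * (msub V (embF Sᶜ)).det) := by
    intro S hS
    have hSm := Finset.mem_powersetCard_univ.1 hS
    rw [det_msub_signed V (card_compl_eq hSm), csgn_eval hSm]
    have hsplit : (∑ i ∈ S, (i : ℕ)) + (∑ i ∈ Sᶜ, (i : ℕ)) = ∑ i : Fin (2*m), (i : ℕ) := by
      rw [Finset.sum_add_sum_compl]
    push_cast
    rw [← hsplit, pow_add]
    ring
  rw [Finset.sum_congr rfl hterm, ← Finset.mul_sum] at hlap
  have heven : (((-1 : ℤ)^((∑ i : Fin (2*m), (i : ℕ))) : ℤ) : ℚ) * ((-2 : ℚ)^m) = 2^m := by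
    have h2 : ((-2 : ℚ))^m = (-1 : ℚ)^m * 2^m := by rw [← neg_one_mul, mul_pow]
    push_cast
    rw [h2, ← mul_assoc, ← pow_add]
    rw [even_Nm.neg_one_pow, one_mul]
  calc ∑ S ∈ Finset.powersetCard m (Finset.univ : Finset (Fin (2*m))),
        (msub V (embF S)).det * (msub V (embF Sᶜ)).det
      = (((-1 : ℤ)^((∑ i : Fin (2*m), (i : ℕ))) : ℤ) : ℚ) * ((((-1 : ℤ)^((∑ i : Fin (2*m), (i : ℕ))) : ℤ) : ℚ)
          * ∑ S ∈ Finset.powersetCard m (Finset.univ : Finset (Fin (2*m))),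
              (msub V (embF S)).det * (msub V (embF Sᶜ)).det) := by
        push_cast
        rw [← mul_assoc, ← pow_add]
        have : Even ((∑ i : Fin (2*m), (i : ℕ)) + (∑ i : Fin (2*m), (i : ℕ))) :=
          ⟨(∑ i : Fin (2*m), (i : ℕ)), rfl⟩
        rw [this.neg_one_pow, one_mul]
    _ = (((-1 : ℤ)^((∑ i : Fin (2*m), (i : ℕ))) : ℤ) : ℚ)
          * ((-2 : ℚ)^m * ((msub V (embF (evens m))).det * (msub V (embF (odds m))).det)) := by
        rw [← hlap]
    _ = 2^m * ((msub V (embF (evens m))).det * (msub V (embF (odds m))).det) := by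
        rw [← mul_assoc, heven]


lemma schurF_det_eq {m : ℕ} (hZf : ℤ → ℚ) (A : Finset ℕ) (h : A.card = m) :
    (Matrix.of fun i j : Fin A.card =>
        hZf ((A.orderEmbOfFin rfl i.rev : ℤ) - ((i.rev : ℕ) : ℤ) - ((i : ℕ) : ℤ) + ((j : ℕ) : ℤ))).det
      = ((Equiv.Perm.sign (Fin.revPerm : Equiv.Perm (Fin m)) : ℤ) : ℚ)
        * (Matrix.of fun j i : Fin m =>
            hZf ((A.orderEmbOfFin h i : ℤ) + ((j : ℕ) : ℤ) - ((m - 1 : ℕ) : ℤ))).det := by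
  subst h
  rw [← Matrix.det_transpose]
  have hmat : (Matrix.of fun i j : Fin A.card =>
      hZf ((A.orderEmbOfFin rfl i.rev : ℤ) - ((i.rev : ℕ) : ℤ) - ((i : ℕ) : ℤ) + ((j : ℕ) : ℤ)))ᵀ
      = (Matrix.of fun j i : Fin A.card =>
          hZf ((A.orderEmbOfFin rfl i : ℤ) + ((j : ℕ) : ℤ) - ((A.card - 1 : ℕ) : ℤ))).submatrix
          id ⇑(Fin.revPerm : Equiv.Perm (Fin A.card)) := by
    ext j i
    simp only [Matrix.transpose_apply, Matrix.of_apply, Matrix.submatrix_apply, id]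
    have hrev : ((Fin.revPerm : Equiv.Perm (Fin A.card)) i) = i.rev := rfl
    rw [hrev]
    have harg : ((A.orderEmbOfFin rfl i.rev : ℕ) : ℤ) - ((i.rev : ℕ) : ℤ) - ((i : ℕ) : ℤ)
        + ((j : ℕ) : ℤ)
        = ((A.orderEmbOfFin rfl i.rev : ℕ) : ℤ) + ((j : ℕ) : ℤ)
          - ((A.card - 1 : ℕ) : ℤ) := by
      have h1 : (i.rev : ℕ) = A.card - 1 - (i : ℕ) := by
        rw [Fin.val_rev]; omega
      have h2 := i.isLt
      omega
    rw [harg]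
  rw [hmat, Matrix.det_permute']

lemma emb_of_image {k : ℕ} {g : Fin k → ℕ} (hg : StrictMono g)
    (h : (Finset.image g Finset.univ).card = k) (i : Fin k) :
    (Finset.image g Finset.univ).orderEmbOfFin h i = g i :=
  (congrFun (Finset.orderEmbOfFin_unique h
    (fun j => Finset.mem_image_of_mem g (Finset.mem_univ j)) hg) i).symm

lemma eps_sq (m : ℕ) :
    ((Equiv.Perm.sign (Fin.revPerm : Equiv.Perm (Fin m)) : ℤ) : ℚ)
      * ((Equiv.Perm.sign (Fin.revPerm : Equiv.Perm (Fin m)) : ℤ) : ℚ) = 1 := by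
  rcases Int.units_eq_one_or (Equiv.Perm.sign (Fin.revPerm : Equiv.Perm (Fin m))) with h | h <;>
    rw [h] <;> norm_num

end CiucuAux

open CiucuAux

/-- Ciucu's identity, proved by Fulmek: for
`T = {t_1 < … < t_{2m}}` a set of positive integers,
`∑ s_{λ(A)}(X_n) s_{λ(B)}(X_n) = 2^m s_{λ(t_2,t_4,…,t_{2m})}(X_n) s_{λ(t_1,t_3,…,t_{2m-1})}(X_n)`,
the sum being over all ordered pairs of disjoint sets `A, B` with `A ∪ B = T`,
`|A| = |B| = m`. -/
theorem schur_identity_even (m n : ℕ) (T : Finset ℕ) (hT : T.card = 2 * m)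
    (hpos : ∀ t ∈ T, 0 < t) (x : ℕ → ℚ)
    (E O : Finset ℕ)
    (hE : E = Finset.image
      (fun i : Fin m => T.orderEmbOfFin hT ⟨2 * (i : ℕ) + 1, by have := i.isLt; omega⟩)
      Finset.univ)
    (hO : O = Finset.image
      (fun i : Fin m => T.orderEmbOfFin hT ⟨2 * (i : ℕ), by have := i.isLt; omega⟩)
      Finset.univ) :
    ∑ A ∈ T.powersetCard m,
        schurF n A (fun i => x i) * schurF n (T \ A) (fun i => x i) =
      2 ^ m * schurF n E (fun i => x i) * schurF n O (fun i => x i) := by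
  classical
  set xx : Fin n → ℚ := fun i => x i with hxx
  set embT := T.orderEmbOfFin hT with hembT
  set V : Fin m → Fin (2*m) → ℚ :=
    fun j c => hZ n ((embT c : ℤ) + ((j : ℕ) : ℤ) - ((m - 1 : ℕ) : ℤ)) xx with hV
  set ε : ℚ := ((Equiv.Perm.sign (Fin.revPerm : Equiv.Perm (Fin m)) : ℤ) : ℚ) with hε
  -- Schur functions of `m`-element sets as determinants with rows in natural order
  have hschur : ∀ (A : Finset ℕ) (hA : A.card = m),
      schurF n A xx = ε * (Matrix.of fun j i : Fin m =>
        hZ n ((A.orderEmbOfFin hA i : ℤ) + ((j : ℕ) : ℤ) - ((m - 1 : ℕ) : ℤ)) xx).det := by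
    intro A hA
    exact schurF_det_eq (fun k => hZ n k xx) A hA
  -- compositum of order embeddings
  have hembcomp : ∀ (S : Finset (Fin (2*m))) (hS : S.card = m)
      (hA : (Finset.image (⇑embT) S).card = m) (i : Fin m),
      (Finset.image (⇑embT) S).orderEmbOfFin hA i = embT (S.orderEmbOfFin hS i) := by
    intro S hS hA i
    exact (congrFun (Finset.orderEmbOfFin_unique hA
      (fun j => Finset.mem_image_of_mem _ (Finset.orderEmbOfFin_mem S hS j))
      (embT.strictMono.comp (S.orderEmbOfFin hS).strictMono)) i).symm
  have hcardim : ∀ S : Finset (Fin (2*m)), (Finset.image (⇑embT) S).card = S.card :=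
    fun S => Finset.card_image_of_injective S embT.injective
  have hexists : ∀ a ∈ T, ∃ c : Fin (2*m), embT c = a := by
    intro a ha
    have : a ∈ Set.range ⇑embT := by
      rw [hembT, Finset.range_orderEmbOfFin]
      exact ha
    exact this
  have hsdiff : ∀ S : Finset (Fin (2*m)),
      T \ Finset.image (⇑embT) S = Finset.image (⇑embT) Sᶜ := by
    intro S
    ext a
    constructor
    · intro hmem
      rw [Finset.mem_sdiff] at hmem
      obtain ⟨haT, hnot⟩ := hmem
      obtain ⟨c, rfl⟩ := hexists a haT
      exact Finset.mem_image_of_mem _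
        (Finset.mem_compl.2 fun hc => hnot (Finset.mem_image_of_mem _ hc))
    · intro hmem
      rcases Finset.mem_image.1 hmem with ⟨c, hc, rfl⟩
      rw [Finset.mem_sdiff]
      refine ⟨Finset.orderEmbOfFin_mem T hT c, fun hcon => ?_⟩
      rcases Finset.mem_image.1 hcon with ⟨c', hc', hcc⟩
      have hcc' := embT.injective hcc
      rw [hcc'] at hc'
      exact (Finset.mem_compl.1 hc) hc'
  -- transfer the sum
  have hbij : (∑ S ∈ Finset.powersetCard m (Finset.univ : Finset (Fin (2*m))),
      (msub V (embF S)).det * (msub V (embF Sᶜ)).det)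
      = ∑ A ∈ T.powersetCard m, schurF n A xx * schurF n (T \ A) xx := by
    refine Finset.sum_bij (fun S _ => Finset.image (⇑embT) S) ?_ ?_ ?_ ?_
    · intro S hS
      rw [Finset.mem_powersetCard]
      refine ⟨fun a ha => ?_, by rw [hcardim S, Finset.mem_powersetCard_univ.1 hS]⟩
      rcases Finset.mem_image.1 ha with ⟨c, _, rfl⟩
      exact Finset.orderEmbOfFin_mem T hT c
    · intro S hS S' hS' him
      exact Finset.image_injective embT.injective him
    · intro A hA
      rw [Finset.mem_powersetCard] at hA
      obtain ⟨hsub, hcard⟩ := hA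
      refine ⟨Finset.univ.filter (fun c => embT c ∈ A), ?_, ?_⟩
      · have himg : Finset.image (⇑embT) (Finset.univ.filter (fun c => embT c ∈ A)) = A := by
          ext a
          constructor
          · intro ha
            rcases Finset.mem_image.1 ha with ⟨c, hc, rfl⟩
            exact (Finset.mem_filter.1 hc).2
          · intro ha
            obtain ⟨c, rfl⟩ := hexists a (hsub ha)
            exact Finset.mem_image_of_mem _ (Finset.mem_filter.2 ⟨Finset.mem_univ _, ha⟩)
        rw [Finset.mem_powersetCard_univ]
        have := hcardim (Finset.univ.filter (fun c => embT c ∈ A))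
        rw [himg] at this
        omega
      · ext a
        constructor
        · intro ha
          rcases Finset.mem_image.1 ha with ⟨c, hc, rfl⟩
          exact (Finset.mem_filter.1 hc).2
        · intro ha
          obtain ⟨c, rfl⟩ := hexists a (hsub ha)
          exact Finset.mem_image_of_mem _ (Finset.mem_filter.2 ⟨Finset.mem_univ _, ha⟩)
    · intro S hS
      have hSm : S.card = m := Finset.mem_powersetCard_univ.1 hS
      have hScm : Sᶜ.card = m := card_compl_eq hSm
      have hAm : (Finset.image (⇑embT) S).card = m := by rw [hcardim S, hSm]
      have hBm : (T \ Finset.image (⇑embT) S).card = m := by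
        rw [hsdiff S, hcardim Sᶜ, hScm]
      rw [hschur _ hAm, hschur _ hBm]
      have e1 : (Matrix.of fun j i : Fin m =>
          hZ n (((Finset.image (⇑embT) S).orderEmbOfFin hAm i : ℤ)
            + ((j : ℕ) : ℤ) - ((m - 1 : ℕ) : ℤ)) xx)
          = msub V (embF S) := by
        ext j i
        simp only [Matrix.of_apply, msub, embF_of_card hSm, hV]
        rw [hembcomp S hSm hAm i]
      have e2 : (Matrix.of fun j i : Fin m =>
          hZ n (((T \ Finset.image (⇑embT) S).orderEmbOfFin hBm i : ℤ)
            + ((j : ℕ) : ℤ) - ((m - 1 : ℕ) : ℤ)) xx)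
          = msub V (embF Sᶜ) := by
        ext j i
        simp only [Matrix.of_apply, msub, embF_of_card hScm, hV]
        have hBm' : (Finset.image (⇑embT) Sᶜ).card = m := by rw [hcardim Sᶜ, hScm]
        rw [orderEmbOfFin_congr (hsdiff S) hBm hBm' i, hembcomp Sᶜ hScm hBm' i]
      rw [e1, e2]
      have := eps_sq m
      rw [← hε] at this
      calc (msub V (embF S)).det * (msub V (embF Sᶜ)).det
          = (ε * ε) * ((msub V (embF S)).det * (msub V (embF Sᶜ)).det) := by
            rw [this, one_mul]
        _ = (ε * (msub V (embF S)).det) * (ε * (msub V (embF Sᶜ)).det) := by ring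
  rw [← hbij, core V]
  -- identify the right-hand side
  have hEcard : E.card = m := by
    rw [hE, Finset.card_image_of_injective _ (fun a b hab => by
      have := embT.injective hab
      exact Fin.ext (by have := congrArg Fin.val this; simp at this; omega))]
    simp
  have hOcard : O.card = m := by
    rw [hO, Finset.card_image_of_injective _ (fun a b hab => by
      have := embT.injective hab
      exact Fin.ext (by have := congrArg Fin.val this; simp at this; omega))]
    simp
  have hdE : (Matrix.of fun j i : Fin m =>
      hZ n ((E.orderEmbOfFin hEcard i : ℤ) + ((j : ℕ) : ℤ) - ((m - 1 : ℕ) : ℤ)) xx)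
      = msub V (embF (odds m)) := by
    ext j i
    simp only [Matrix.of_apply, msub, embF_of_card (odds_card (m := m)), hV]
    have hmono : StrictMono (fun i : Fin m =>
        embT (⟨2 * (i : ℕ) + 1, by have := i.isLt; omega⟩ : Fin (2*m))) := by
      intro a b hab
      exact embT.strictMono (Fin.lt_def.2 (by simp; omega))
    have hEc : (Finset.image (fun i : Fin m =>
        embT (⟨2 * (i : ℕ) + 1, by have := i.isLt; omega⟩ : Fin (2*m))) Finset.univ).card
        = m := by rw [← hE]; exact hEcard
    rw [orderEmbOfFin_congr hE hEcard hEc i, emb_of_image hmono hEc i, emb_odds i]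
  have hdO : (Matrix.of fun j i : Fin m =>
      hZ n ((O.orderEmbOfFin hOcard i : ℤ) + ((j : ℕ) : ℤ) - ((m - 1 : ℕ) : ℤ)) xx)
      = msub V (embF (evens m)) := by
    ext j i
    simp only [Matrix.of_apply, msub, embF_of_card (evens_card (m := m)), hV]
    have hmono : StrictMono (fun i : Fin m =>
        embT (⟨2 * (i : ℕ), by have := i.isLt; omega⟩ : Fin (2*m))) := by
      intro a b hab
      exact embT.strictMono (Fin.lt_def.2 (by simp; omega))
    have hOc : (Finset.image (fun i : Fin m =>
        embT (⟨2 * (i : ℕ), by have := i.isLt; omega⟩ : Fin (2*m))) Finset.univ).card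
        = m := by rw [← hO]; exact hOcard
    rw [orderEmbOfFin_congr hO hOcard hOc i, emb_of_image hmono hOc i, emb_evens i]
  rw [hschur E hEcard, hschur O hOcard, hdE, hdO]
  have := eps_sq m
  rw [← hε] at this
  calc 2 ^ m * ((msub V (embF (evens m))).det * (msub V (embF (odds m))).det)
      = (ε * ε) * (2 ^ m * ((msub V (embF (evens m))).det * (msub V (embF (odds m))).det)) := by
        rw [this, one_mul]
    _ = 2 ^ m * (ε * (msub V (embF (odds m))).det) * (ε * (msub V (embF (evens m))).det) := by
        ring
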